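/- arXiv:1311.2032 — 3 statements merged into one kernel-verified Lean document; each statement's English description precedes it below -/
import Mathlib

section
/- Let P ⊆ ℝ² be finite with |P| ≥ 2, let T be a Euclidean minimum spanning tree of P, let {p,q} be an edge of T, and let l ∈ {0,…,5} be such that q ∈ W_l(p). Then ‖p − q‖ = min_{r ∈ V_l(p)} ‖p − r‖; that is, q is a nearest point to p among the points of P lying in the wedge W_l(p). -/
/- Common geometric setup: the Euclidean plane, wedges `W_l`, bisectors `b_l`,
equilateral triangles `∆_l` and `l`-tri's, circular sectors `σ_l` and `l`-pies,
and the proximity graphs (Semi-Yao, nearest-neighbor, Equilateral/Pie Delaunay,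
Yao) together with Euclidean minimum spanning trees. -/

open Real EuclideanGeometry
open scoped RealInnerProductSpace

noncomputable section

abbrev E : Type := EuclideanSpace ℝ (Fin 2)

/-- The point `(a, b)` in the Euclidean plane. -/
def pt (a b : ℝ) : E := (WithLp.equiv 2 (Fin 2 → ℝ)).symm ![a, b]

/-- The unit vector at polar angle `θ`. -/
def dir (θ : ℝ) : E := pt (Real.cos θ) (Real.sin θ)

/-- The lower boundary angle `(2l-1)π/6` of the `l`-th wedge. -/
def lo (l : Fin 6) : ℝ := (2 * ((l : ℕ) : ℝ) - 1) * π / 6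

/-- The upper boundary angle `(2l+1)π/6` of the `l`-th wedge. -/
def hi (l : Fin 6) : ℝ := (2 * ((l : ℕ) : ℝ) + 1) * π / 6

/-- The half-open wedge `W_l`: all nonzero points whose polar angle (mod `2π`)
lies in `[(2l-1)π/6, (2l+1)π/6)`. -/
def wedge (l : Fin 6) : Set E :=
  {x | x ≠ 0 ∧ ∃ θ : ℝ, lo l ≤ θ ∧ θ < hi l ∧ x = ‖x‖ • dir θ}

/-- `W_l(p)`, the translate of `W_l` with apex `p`. -/
def wedgeAt (l : Fin 6) (p : E) : Set E := {x | x - p ∈ wedge l}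

/-- The unit bisector vector `b_l = (cos(lπ/3), sin(lπ/3))` of `W_l`. -/
def bvec (l : Fin 6) : E := dir (((l : ℕ) : ℝ) * π / 3)

/-- `V_l(p) = P ∩ W_l(p)`. -/
def Vl (P : Finset E) (l : Fin 6) (p : E) : Set E := {x | x ∈ P ∧ x ∈ wedgeAt l p}

/-- The closed equilateral triangle `∆_l` with vertices `0`, `dir ((2l-1)π/6)`,
`dir ((2l+1)π/6)`. -/
def tri (l : Fin 6) : Set E := convexHull ℝ {0, dir (lo l), dir (hi l)}

/-- The vertex set of `∆_l`. -/
def triVerts (l : Fin 6) : Set E := {0, dir (lo l), dir (hi l)}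

/-- The `l`-tri `c + lam • ∆_l`. -/
def lTri (l : Fin 6) (c : E) (lam : ℝ) : Set E := (fun x => c + lam • x) '' tri l

/-- The closed circular sector (piece of pie) `σ_l` of the unit disk. -/
def sector (l : Fin 6) : Set E :=
  {x | ‖x‖ ≤ 1 ∧ (x = 0 ∨ ∃ θ : ℝ, lo l ≤ θ ∧ θ ≤ hi l ∧ x = ‖x‖ • dir θ)}

/-- The `l`-pie `c + lam • σ_l`. -/
def lPie (l : Fin 6) (c : E) (lam : ℝ) : Set E := (fun x => c + lam • x) '' sector l

/-- Directed Semi-Yao graph edge from `a` to `b`: `a ∈ V_l(b)` for some `l` and `a`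
has the minimum `b_l`-coordinate among the points of `V_l(b)`. -/
def SYG (P : Finset E) (a b : E) : Prop :=
  b ∈ P ∧ ∃ l : Fin 6, a ∈ Vl P l b ∧
    ∀ r ∈ Vl P l b, ⟪a - b, bvec l⟫ ≤ ⟪r - b, bvec l⟫

/-- Undirected Semi-Yao graph edge. -/
def SYGu (P : Finset E) (p q : E) : Prop := SYG P p q ∨ SYG P q p

/-- Directed nearest-neighbor graph edge from `a` to `b`: `b ∈ P \ {a}` and
`‖a - b‖ = min_{r ∈ P \ {a}} ‖a - r‖`. -/
def NNG (P : Finset E) (a b : E) : Prop :=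
  a ∈ P ∧ b ∈ P ∧ b ≠ a ∧ ∀ r ∈ P, r ≠ a → ‖a - b‖ ≤ ‖a - r‖

/-- Edge of the Equilateral Delaunay triangulation `EDT_l(P)`: there is an `l`-tri,
empty with respect to `P`, with both endpoints on its boundary. -/
def EDT (P : Finset E) (l : Fin 6) (p q : E) : Prop :=
  p ∈ P ∧ q ∈ P ∧ p ≠ q ∧ ∃ c : E, ∃ lam : ℝ, 0 < lam ∧
    p ∈ frontier (lTri l c lam) ∧ q ∈ frontier (lTri l c lam) ∧
    ∀ r ∈ P, r ∉ interior (lTri l c lam)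

/-- Edge of the Equilateral Delaunay graph `EDG(P) = EDT_0(P) ∪ EDT_1(P)`. -/
def EDG (P : Finset E) (p q : E) : Prop := EDT P 0 p q ∨ EDT P 1 p q

/-- Directed Yao-graph edge from `p` to `q`: `q ∈ V_l(p)` for some `l` and
`‖p - q‖ = min_{r ∈ V_l(p)} ‖p - r‖`. -/
def YG (P : Finset E) (p q : E) : Prop :=
  p ∈ P ∧ ∃ l : Fin 6, q ∈ Vl P l p ∧ ∀ r ∈ Vl P l p, ‖p - q‖ ≤ ‖p - r‖

/-- Edge of the Pie Delaunay triangulation `PDT_l(P)`: there is an `l`-pie, empty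
with respect to `P`, with both endpoints on its boundary. -/
def PDT (P : Finset E) (l : Fin 6) (p q : E) : Prop :=
  p ∈ P ∧ q ∈ P ∧ p ≠ q ∧ ∃ c : E, ∃ lam : ℝ, 0 < lam ∧
    p ∈ frontier (lPie l c lam) ∧ q ∈ frontier (lPie l c lam) ∧
    ∀ r ∈ P, r ∉ interior (lPie l c lam)

/-- Edge of the Pie Delaunay graph `PDG(P) = PDT_0(P) ∪ ⋯ ∪ PDT_5(P)`. -/
def PDG (P : Finset E) (p q : E) : Prop := ∃ l : Fin 6, PDT P l p q

/-- Total Euclidean edge weight of a graph on the points of `P`. -/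
def edgeWeight (P : Finset E) (G : SimpleGraph {x // x ∈ P}) : ℝ :=
  ∑ e ∈ G.edgeSet.toFinite.toFinset,
    Sym2.lift ⟨fun (a b : {x // x ∈ P}) => ‖(a : E) - (b : E)‖,
      fun _ _ => norm_sub_rev _ _⟩ e

/-- `T` is a Euclidean minimum spanning tree of `P`: a spanning tree (connected and
acyclic graph on the vertex set `P`) of minimum total Euclidean edge weight. -/
def IsEMST (P : Finset E) (T : SimpleGraph {x // x ∈ P}) : Prop :=
  T.IsTree ∧ ∀ G : SimpleGraph {x // x ∈ P}, G.IsTree → edgeWeight P T ≤ edgeWeight P G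


/-- Inner product of two unit direction vectors. -/
lemma inner_dir_dir (θ₁ θ₂ : ℝ) : ⟪dir θ₁, dir θ₂⟫ = Real.cos (θ₁ - θ₂) := by
  simp only [dir, pt, PiLp.inner_apply, RCLike.inner_apply, conj_trivial,
    WithLp.equiv_symm_apply, PiLp.toLp_apply, Fin.sum_univ_two, Real.cos_sub, mul_comm,
    Matrix.cons_val_zero, Matrix.cons_val_one, Matrix.head_cons]

lemma inner_smul_dir (r s θ₁ θ₂ : ℝ) :
    ⟪r • dir θ₁, s • dir θ₂⟫ = r * s * Real.cos (θ₁ - θ₂) := by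
  rw [real_inner_smul_left, real_inner_smul_right, inner_dir_dir]; ring

/-- Geometric key lemma: two points in the same wedge, one strictly closer
to the apex, are strictly closer to each other than the farther one is to the apex. -/
lemma wedge_close (l : Fin 6) {a b : E} (ha : a ∈ wedge l) (hb : b ∈ wedge l)
    (h : ‖a‖ < ‖b‖) : ‖b - a‖ < ‖b‖ := by
  obtain ⟨ha0, θ₁, hθ₁l, hθ₁u, hae⟩ := ha
  obtain ⟨hb0, θ₂, hθ₂l, hθ₂u, hbe⟩ := hb
  have hwidth : hi l - lo l = π / 3 := by unfold hi lo; ring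
  have hd : |θ₂ - θ₁| < π / 3 := by
    rw [abs_lt]; constructor <;> linarith
  have hcos : 1 / 2 < Real.cos (θ₂ - θ₁) := by
    have h1 : Real.cos (π / 3) < Real.cos |θ₂ - θ₁| :=
      Real.cos_lt_cos_of_nonneg_of_le_pi (abs_nonneg _) (by linarith [Real.pi_pos]) hd
    rwa [Real.cos_abs, Real.cos_pi_div_three] at h1
  have hinner : ⟪b, a⟫ = ‖b‖ * ‖a‖ * Real.cos (θ₂ - θ₁) := by
    conv_lhs => rw [hbe, hae]
    exact inner_smul_dir _ _ _ _
  have hA0 : 0 < ‖a‖ := norm_pos_iff.mpr ha0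
  have hsq : ‖b - a‖ ^ 2 < ‖b‖ ^ 2 := by
    have hns : ‖b - a‖ ^ 2 = ‖b‖ ^ 2 - 2 * ⟪b, a⟫ + ‖a‖ ^ 2 := norm_sub_sq_real b a
    nlinarith [mul_pos hA0 (hA0.trans h)]
  exact lt_of_pow_lt_pow_left₀ 2 (norm_nonneg b) hsq

/-- Walk decomposition: any walk in `T` either survives deletion of the edge
`{p,q}`, or can be split at that edge. -/
lemma reach_side {V : Type*} {T : SimpleGraph V} {p q : V}
    (hbridge : ¬ (T \ SimpleGraph.fromEdgeSet {s(p, q)}).Reachable p q) :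
    ∀ {x y : V} (_ : T.Walk x y),
      (T \ SimpleGraph.fromEdgeSet {s(p, q)}).Reachable x y ∨
      ((T \ SimpleGraph.fromEdgeSet {s(p, q)}).Reachable x p ∧
        (T \ SimpleGraph.fromEdgeSet {s(p, q)}).Reachable q y) ∨
      ((T \ SimpleGraph.fromEdgeSet {s(p, q)}).Reachable x q ∧
        (T \ SimpleGraph.fromEdgeSet {s(p, q)}).Reachable p y) := by
  intro x y w
  induction w with
  | nil => exact Or.inl (SimpleGraph.Reachable.refl _)
  | cons h w ih =>
    rename_i u v z
    by_cases he : s(u, v) = s(p, q)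
    · rw [Sym2.eq_iff] at he
      rcases he with ⟨rfl, rfl⟩ | ⟨rfl, rfl⟩
      · -- u = p, v = q
        rcases ih with h1 | ⟨h1, h2⟩ | ⟨h1, h2⟩
        · exact Or.inr (Or.inl ⟨SimpleGraph.Reachable.refl _, h1⟩)
        · exact absurd h1.symm hbridge
        · exact Or.inl h2
      · -- u = q, v = p
        rcases ih with h1 | ⟨h1, h2⟩ | ⟨h1, h2⟩
        · exact Or.inr (Or.inr ⟨SimpleGraph.Reachable.refl _, h1⟩)
        · exact Or.inl h2
        · exact absurd h1 hbridge
    · have hadj' : (T \ SimpleGraph.fromEdgeSet {s(p, q)}).Adj u v := by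
        rw [SimpleGraph.sdiff_adj, SimpleGraph.fromEdgeSet_adj]
        exact ⟨h, fun hc => he (by simpa using hc.1)⟩
      rcases ih with h1 | ⟨h1, h2⟩ | ⟨h1, h2⟩
      · exact Or.inl (hadj'.reachable.trans h1)
      · exact Or.inr (Or.inl ⟨hadj'.reachable.trans h1, h2⟩)
      · exact Or.inr (Or.inr ⟨hadj'.reachable.trans h1, h2⟩)

/-- Tree exchange argument: if `{p,q}` is an edge of the EMST `T`, `a` is on the
`p`-side and `b` on the `q`-side of `T` minus this edge, and `‖a - b‖ < ‖p - q‖`,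
we reach a contradiction. -/
lemma emst_exchange (P : Finset E) (T : SimpleGraph {x // x ∈ P}) (hT : IsEMST P T)
    (p q a b : {x // x ∈ P}) (hadj : T.Adj p q)
    (ha : (T \ SimpleGraph.fromEdgeSet {s(p, q)}).Reachable a p)
    (hb : (T \ SimpleGraph.fromEdgeSet {s(p, q)}).Reachable b q)
    (hab : a ≠ b)
    (hlt : ‖(a : E) - (b : E)‖ < ‖(p : E) - (q : E)‖) : False := by
  classical
  set T' : SimpleGraph {x // x ∈ P} := T \ SimpleGraph.fromEdgeSet {s(p, q)} with hT'
  have hT'le : T' ≤ T := sdiff_le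
  have hbridge : ¬ T'.Reachable p q :=
    ((SimpleGraph.isAcyclic_iff_forall_adj_isBridge.mp hT.1.2) hadj)
  have hnab : ¬ T'.Reachable a b := fun h => hbridge (ha.symm.trans (h.trans hb))
  -- every vertex reaches p or q in T'
  have hA : ∀ x, T'.Reachable x p ∨ T'.Reachable x q := by
    intro x
    obtain ⟨w⟩ := hT.1.1.preconnected x p
    rcases reach_side hbridge w with h1 | ⟨h1, _⟩ | ⟨h1, _⟩
    · exact Or.inl h1
    · exact Or.inl h1
    · exact Or.inr h1
  -- the exchange graph
  set G : SimpleGraph {x // x ∈ P} := T' ⊔ SimpleGraph.fromEdgeSet {s(a, b)} with hG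
  have hGedge : G.edgeSet = T'.edgeSet ∪ {s(a, b)} := by
    rw [hG, SimpleGraph.edgeSet_sup, SimpleGraph.edgeSet_fromEdgeSet]
    congr 1
    ext e
    simp only [Set.mem_diff, Set.mem_singleton_iff, Set.mem_setOf_eq,
      and_iff_left_iff_imp]
    rintro rfl
    exact fun h => hab (Sym2.mk_isDiag_iff.mp h)
  have hGab : G.Adj a b := by
    rw [hG]
    exact Or.inr (by rw [SimpleGraph.fromEdgeSet_adj]; exact ⟨rfl, hab⟩)
  have hT'subG : T' ≤ G := le_sup_left
  -- G is connected
  have hreach : ∀ x, G.Reachable x p := by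
    intro x
    rcases hA x with h1 | h1
    · exact h1.mono hT'subG
    · exact ((h1.trans hb.symm).mono hT'subG).trans
        (hGab.symm.reachable.trans (ha.mono hT'subG))
  have hGpre : G.Preconnected := fun x y => (hreach x).trans (hreach y).symm
  have hnonem : Nonempty {x // x ∈ P} := ⟨p⟩
  have hGconn : G.Connected := SimpleGraph.Connected.mk hGpre
  -- G is acyclic
  have hGacyc : G.IsAcyclic := by
    intro v c hc
    by_cases he : s(a, b) ∈ c.edges
    · have h2 := (SimpleGraph.adj_and_reachable_delete_edges_iff_exists_cycle.mpr
        ⟨v, c, hc, he⟩).2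
      apply hnab
      refine h2.mono ?_
      rw [← SimpleGraph.edgeSet_subset_edgeSet]
      rw [SimpleGraph.edgeSet_deleteEdges, hGedge]
      intro e he'
      rcases he'.1 with h3 | h3
      · exact h3
      · exact absurd h3 he'.2
    · have hsub : ∀ e ∈ c.edges, e ∈ T.edgeSet := by
        intro e hec
        have := c.edges_subset_edgeSet hec
        rw [hGedge] at this
        rcases this with h3 | h3
        · exact (SimpleGraph.edgeSet_subset_edgeSet.mpr hT'le) h3
        · exact absurd (h3 ▸ hec) he
      exact hT.1.2 (c.transfer T hsub) (hc.transfer hsub)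
  have hGtree : G.IsTree := ⟨hGconn, hGacyc⟩
  -- edge set bookkeeping
  have hpqT : s(p, q) ∈ T.edgeSet := hadj
  have hpqT' : s(p, q) ∉ T'.edgeSet := by
    rw [hT', SimpleGraph.edgeSet_sdiff, SimpleGraph.edgeSet_fromEdgeSet,
      SimpleGraph.edgeSet_sdiff_sdiff_isDiag]
    exact fun h => h.2 rfl
  have habT' : s(a, b) ∉ T'.edgeSet := fun h => hnab (SimpleGraph.Adj.reachable h)
  have hTset : T.edgeSet = insert (s(p, q)) T'.edgeSet := by
    rw [hT', SimpleGraph.edgeSet_sdiff, SimpleGraph.edgeSet_fromEdgeSet,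
      SimpleGraph.edgeSet_sdiff_sdiff_isDiag]
    ext e
    simp only [Set.mem_insert_iff, Set.mem_diff, Set.mem_singleton_iff]
    constructor
    · intro h
      by_cases h' : e = s(p, q)
      · exact Or.inl h'
      · exact Or.inr ⟨h, h'⟩
    · rintro (rfl | ⟨h, _⟩)
      · exact hpqT
      · exact h
  have hGset : G.edgeSet = insert (s(a, b)) T'.edgeSet := by
    rw [hGedge, Set.union_comm, Set.singleton_union]
  -- weights
  set f : Sym2 {x // x ∈ P} → ℝ :=
    Sym2.lift ⟨fun (a b : {x // x ∈ P}) => ‖(a : E) - (b : E)‖,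
      fun _ _ => norm_sub_rev _ _⟩ with hf
  have hwT : edgeWeight P T = f s(p, q) + ∑ e ∈ T'.edgeSet.toFinite.toFinset, f e := by
    rw [edgeWeight]
    have : T.edgeSet.toFinite.toFinset = insert (s(p, q)) T'.edgeSet.toFinite.toFinset := by
      ext e
      simp only [Set.Finite.mem_toFinset, Finset.mem_insert, hTset, Set.mem_insert_iff]
    rw [this, Finset.sum_insert (by simpa using hpqT')]
  have hwG : edgeWeight P G = f s(a, b) + ∑ e ∈ T'.edgeSet.toFinite.toFinset, f e := by
    rw [edgeWeight]
    have : G.edgeSet.toFinite.toFinset = insert (s(a, b)) T'.edgeSet.toFinite.toFinset := by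
      ext e
      simp only [Set.Finite.mem_toFinset, Finset.mem_insert, hGset, Set.mem_insert_iff]
    rw [this, Finset.sum_insert (by simpa using habT')]
  have hfab : f s(a, b) = ‖(a : E) - (b : E)‖ := by rw [hf, Sym2.lift_mk]
  have hfpq : f s(p, q) = ‖(p : E) - (q : E)‖ := by rw [hf, Sym2.lift_mk]
  have hle := hT.2 G hGtree
  rw [hwT, hwG, hfab, hfpq] at hle
  linarith

/-- if `{p, q}` is an edge of a Euclidean minimum spanning tree of `P`
and `q ∈ W_l(p)`, then `q` is a nearest point to `p` among the points of `P` in `W_l(p)`. -/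
theorem emst_edge_is_nearest_in_wedge (P : Finset E) (hP : 2 ≤ P.card)
    (T : SimpleGraph {x // x ∈ P}) (hT : IsEMST P T)
    (p q : {x // x ∈ P}) (hadj : T.Adj p q)
    (l : Fin 6) (hw : (q : E) ∈ wedgeAt l (p : E)) :
    ∀ r ∈ Vl P l (p : E), ‖(p : E) - (q : E)‖ ≤ ‖(p : E) - r‖ := by
  classical
  intro r hr
  by_contra hcon
  push_neg at hcon
  obtain ⟨hrP, hrw⟩ := hr
  set r' : {x // x ∈ P} := ⟨r, hrP⟩ with hr'
  -- geometry: both candidate replacement edges are strictly shorter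
  have hwq : (q : E) - (p : E) ∈ wedge l := hw
  have hwr : r - (p : E) ∈ wedge l := hrw
  have hnorm_lt : ‖r - (p : E)‖ < ‖(q : E) - (p : E)‖ := by
    rw [norm_sub_rev r, norm_sub_rev (q : E)]; exact hcon
  have hqr : ‖(q : E) - r‖ < ‖(p : E) - (q : E)‖ := by
    have := wedge_close l hwr hwq hnorm_lt
    rw [sub_sub_sub_cancel_right] at this
    rw [norm_sub_rev (p : E)]
    exact this
  have hrp0 : r - (p : E) ≠ 0 := hwr.1
  have hrnep : r' ≠ p := by
    intro h
    apply hrp0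
    rw [hr'] at h
    have : r = (p : E) := congrArg Subtype.val h
    rw [this, sub_self]
  -- bridge fact
  have hbridge : ¬ (T \ SimpleGraph.fromEdgeSet {s(p, q)}).Reachable p q :=
    ((SimpleGraph.isAcyclic_iff_forall_adj_isBridge.mp hT.1.2) hadj)
  -- every vertex reaches p or q after deleting the edge
  have hA : ∀ x, (T \ SimpleGraph.fromEdgeSet {s(p, q)}).Reachable x p ∨
      (T \ SimpleGraph.fromEdgeSet {s(p, q)}).Reachable x q := by
    intro x
    obtain ⟨w⟩ := hT.1.1.preconnected x p
    rcases reach_side hbridge w with h1 | ⟨h1, _⟩ | ⟨h1, _⟩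
    · exact Or.inl h1
    · exact Or.inl h1
    · exact Or.inr h1
  rcases hA r' with h1 | h1
  · -- r on p's side: exchange with edge {r, q}
    have hrq : r' ≠ q := by
      intro h
      subst h
      exact hbridge (h1.symm)
    exact emst_exchange P T hT p q r' q hadj h1 (SimpleGraph.Reachable.refl _) hrq
      (by rw [show ((r' : E)) = r from rfl, norm_sub_rev]; exact hqr)
  · -- r on q's side: exchange with edge {p, r}
    exact emst_exchange P T hT p q p r' hadj (SimpleGraph.Reachable.refl _) h1
      hrnep.symm (by simpa [hr'] using hcon)
end
end

section
/- Let P ⊆ ℝ² be finite, let T be a Euclidean minimum spanning tree of P, and let {p_i, p_j} be an edge of T. Let P₁ and P₂ be the vertex sets of the two connected components of the graph obtained from T by deleting the edge {p_i, p_j}, with p_i ∈ P₁ and p_j ∈ P₂. If p_r ∈ P satisfies ∠p_j p_i p_r ≤ π/3 and ‖p_i − p_r‖ > ‖p_i − p_j‖ > ‖p_j − p_r‖, then p_r ∈ P₂. -/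
/- Common geometric setup: the Euclidean plane, wedges `W_l`, bisectors `b_l`,
equilateral triangles `∆_l` and `l`-tri's, circular sectors `σ_l` and `l`-pies,
and the proximity graphs (Semi-Yao, nearest-neighbor, Equilateral/Pie Delaunay,
Yao) together with Euclidean minimum spanning trees. -/

open Real EuclideanGeometry
open scoped RealInnerProductSpace

noncomputable section

open SimpleGraph in
lemma reach_del_aux {V : Type*} {T : SimpleGraph V} (a b : V) {v c : V} (p : T.Walk v c)
    (hc : c = b) :
    (T.deleteEdges {s(a, b)}).Reachable v a ∨ (T.deleteEdges {s(a, b)}).Reachable v b := by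
  induction p with
  | nil => right; rw [← hc]
  | @cons u x _ h q ih =>
    by_cases he : s(u, x) = s(a, b)
    · rw [Sym2.eq_iff] at he
      rcases he with ⟨h1, h2⟩ | ⟨h1, h2⟩
      · left; rw [h1]
      · right; rw [h1]
    · have hadj : (T.deleteEdges {s(a, b)}).Adj u x := by
        rw [SimpleGraph.deleteEdges_adj]
        exact ⟨h, by simpa using he⟩
      rcases ih hc with h' | h'
      · exact Or.inl (hadj.reachable.trans h')
      · exact Or.inr (hadj.reachable.trans h')

open SimpleGraph in
lemma reach_del {V : Type*} {T : SimpleGraph V} (a : V) {b v : V} (p : T.Walk v b) :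
    (T.deleteEdges {s(a, b)}).Reachable v a ∨ (T.deleteEdges {s(a, b)}).Reachable v b :=
  reach_del_aux a b p rfl

/-- let `{p_i, p_j}` be an edge of a Euclidean minimum spanning tree `T` of
`P`, and let `P₁, P₂` be the components of `T` minus this edge, with `p_i ∈ P₁` and
`p_j ∈ P₂`. If `∠ p_j p_i p_r ≤ π/3` and `‖p_i - p_r‖ > ‖p_i - p_j‖ > ‖p_j - p_r‖`, then
`p_r ∈ P₂`, i.e., `p_r` is reachable from `p_j` in `T` minus the edge `{p_i, p_j}`. -/
theorem emst_longer_endpoint_in_far_component (P : Finset E)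
    (T : SimpleGraph {x // x ∈ P}) (hT : IsEMST P T)
    (pi pj pr : {x // x ∈ P}) (hadj : T.Adj pi pj)
    (hangle : ∠ (pj : E) (pi : E) (pr : E) ≤ π / 3)
    (h1 : ‖(pi : E) - (pr : E)‖ > ‖(pi : E) - (pj : E)‖)
    (h2 : ‖(pi : E) - (pj : E)‖ > ‖(pj : E) - (pr : E)‖) :
    (T.deleteEdges {s(pi, pj)}).Reachable pr pj := by
  classical
  by_contra hnr
  obtain ⟨htree, hmin⟩ := hT
  have hij : pi ≠ pj := hadj.ne
  have hrj : pr ≠ pj := by rintro rfl; exact hnr (SimpleGraph.Reachable.refl _)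
  have hri : pr ≠ pi := by
    rintro rfl
    rw [sub_self, norm_zero] at h1
    exact absurd h1 (not_lt.2 (norm_nonneg _))
  set e : Sym2 {x // x ∈ P} := s(pi, pj) with he
  set e' : Sym2 {x // x ∈ P} := s(pr, pj) with he'
  set T' := T.deleteEdges {e} with hT'def
  have hreach : T'.Reachable pr pi := by
    rcases htree.isConnected pr pj with ⟨p⟩
    rcases reach_del pi p with h | h
    · exact h
    · exact absurd h hnr
  have hee' : e' ≠ e := by
    rw [he', he, Ne, Sym2.eq_iff]
    rintro (⟨h1, h2⟩ | ⟨h1, h2⟩)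
    · exact hri h1
    · exact hrj h1
  have hnadjT : e' ∉ T.edgeSet := by
    intro hmem
    apply hnr
    refine SimpleGraph.Adj.reachable ?_
    rw [SimpleGraph.deleteEdges_adj]
    exact ⟨hmem, by simpa using hee'⟩
  set G := T' ⊔ SimpleGraph.fromEdgeSet {e'} with hGdef
  have hGadj' : G.Adj pr pj := by
    rw [hGdef, SimpleGraph.sup_adj]
    right
    rw [SimpleGraph.fromEdgeSet_adj]
    exact ⟨rfl, hrj⟩
  have hGE : G.edgeSet = insert e' (T.edgeSet \ {e}) := by
    rw [hGdef, SimpleGraph.edgeSet_sup, hT'def, SimpleGraph.edgeSet_deleteEdges,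
      SimpleGraph.edgeSet_fromEdgeSet]
    have hd : ({e'} : Set (Sym2 {x // x ∈ P})) \ {e'' | e''.IsDiag} = {e'} := by
      ext x
      simp only [Set.mem_diff, Set.mem_singleton_iff, Set.mem_setOf_eq, and_iff_left_iff_imp]
      rintro rfl
      rw [he', Sym2.mk_isDiag_iff]
      exact hrj
    rw [show (Sym2.diagSet : Set (Sym2 {x // x ∈ P})) = {e'' | e''.IsDiag} from rfl, hd, Set.union_comm, Set.insert_eq]
  have hbridge : G.IsBridge e' := by
    rw [he', SimpleGraph.isBridge_iff]
    refine fun hre => hnr ?_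
    have hle : G.deleteEdges {s(pr, pj)} ≤ T' := by
      intro x y hxy
      rw [SimpleGraph.deleteEdges_adj] at hxy
      rcases hxy.1 with h | h
      · exact h
      · rw [SimpleGraph.fromEdgeSet_adj] at h
        exact absurd h.1 hxy.2
    exact hre.mono hle
  have hGac : G.IsAcyclic := by
    intro v c hc
    have hce : e' ∉ c.edges := by
      have := (show G.IsBridge s(pr, pj) from he' ▸ hbridge).notMem_edges_of_isCycle hc
      rwa [← he'] at this
    have hedges : ∀ e'' ∈ c.edges, e'' ∈ T.edgeSet := by
      intro e'' hmem
      have hx := c.edges_subset_edgeSet hmem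
      rw [hGE, Set.mem_insert_iff] at hx
      rcases hx with h | h
      · exact absurd (h ▸ hmem) hce
      · exact h.1
    exact htree.IsAcyclic (c.transfer T hedges) (hc.transfer hedges)
  have hGconn : G.Connected := by
    rw [SimpleGraph.connected_iff]
    have key : ∀ v, G.Reachable v pj := by
      intro v
      rcases htree.isConnected v pj with ⟨p⟩
      rcases reach_del pi p with h | h
      · exact (h.mono le_sup_left).trans
          (((hreach.mono le_sup_left).symm.trans hGadj'.reachable))
      · exact h.mono le_sup_left
    exact ⟨fun u v => (key u).trans (key v).symm, ⟨pi⟩⟩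
  have hGtree : G.IsTree := ⟨hGconn, hGac⟩
  have hmemT : e ∈ T.edgeSet.toFinite.toFinset := by
    rw [Set.Finite.mem_toFinset]
    exact hadj
  have hfin : G.edgeSet.toFinite.toFinset = insert e' (T.edgeSet.toFinite.toFinset.erase e) := by
    ext x
    simp only [Set.Finite.mem_toFinset, hGE, Set.mem_insert_iff, Set.mem_diff,
      Set.mem_singleton_iff, Finset.mem_insert, Finset.mem_erase]
    tauto
  have he'notin : e' ∉ T.edgeSet.toFinite.toFinset.erase e := by
    rw [Finset.mem_erase, Set.Finite.mem_toFinset]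
    rintro ⟨-, h⟩
    exact hnadjT h
  have hlt : edgeWeight P G < edgeWeight P T := by
    unfold edgeWeight
    rw [hfin, Finset.sum_insert he'notin, ← Finset.add_sum_erase _ _ hmemT]
    refine add_lt_add_left ?_ _
    show ‖(pr : E) - (pj : E)‖ < ‖(pi : E) - (pj : E)‖
    rw [norm_sub_rev]
    exact h2
  exact absurd (hmin G hGtree) (not_le.2 hlt)
end
end

section
/- Let P ⊆ ℝ² be finite with |P| ≥ 2. Then the undirected Semi-Yao graph of P has at least one edge, and the minimum of ‖p − q‖ over all edges {p,q} of the undirected Semi-Yao graph of P equals the minimum of ‖p − q‖ over all pairs of distinct points p, q ∈ P (the closest-pair distance of P). -/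
/- Common geometric setup: the Euclidean plane, wedges `W_l`, bisectors `b_l`,
equilateral triangles `∆_l` and `l`-tri's, circular sectors `σ_l` and `l`-pies,
and the proximity graphs (Semi-Yao, nearest-neighbor, Equilateral/Pie Delaunay,
Yao) together with Euclidean minimum spanning trees. -/

open Real EuclideanGeometry
open scoped RealInnerProductSpace

noncomputable section

lemma pt_apply0 (a b : ℝ) : pt a b 0 = a := rfl
lemma pt_apply1 (a b : ℝ) : pt a b 1 = b := rfl

lemma inner_pt (a b a' b' : ℝ) : ⟪pt a b, pt a' b'⟫ = a * a' + b * b' := by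
  simp [PiLp.inner_apply, Fin.sum_univ_two, pt_apply0, pt_apply1]; ring

lemma inner_dir (θ φ : ℝ) : ⟪dir θ, dir φ⟫ = Real.cos (θ - φ) := by
  rw [dir, dir, inner_pt, Real.cos_sub]

lemma norm_dir (θ : ℝ) : ‖dir θ‖ = 1 := by
  rw [EuclideanSpace.norm_eq]
  simp only [dir, pt_apply0, pt_apply1, Fin.sum_univ_two, Real.norm_eq_abs, sq_abs]
  rw [Real.cos_sq_add_sin_sq, Real.sqrt_one]

lemma key (l : Fin 6) (u v : E) (hu : u ∈ wedge l) (hv : v ∈ wedge l)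
    (h1 : ‖u‖ ≤ ‖v‖) (h2 : ‖u‖ ≤ ‖v - u‖) : ⟪u, bvec l⟫ ≤ ⟪v, bvec l⟫ := by
  obtain ⟨hu0, θ1, hθ1l, hθ1u, hue⟩ := hu
  obtain ⟨hv0, θ2, hθ2l, hθ2u, hve⟩ := hv
  set c : ℝ := ((l : ℕ) : ℝ) * π / 3 with hc
  set s : ℝ := ‖u‖ with hs
  set t : ℝ := ‖v‖ with ht
  have hs0 : 0 < s := norm_pos_iff.mpr hu0
  have ht0 : 0 < t := norm_pos_iff.mpr hv0
  have hb : bvec l = dir c := rfl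
  have e1 : ⟪u, bvec l⟫ = s * Real.cos (θ1 - c) := by
    rw [hb]; nth_rewrite 1 [hue]
    rw [real_inner_smul_left, inner_dir]
  have e2 : ⟪v, bvec l⟫ = t * Real.cos (θ2 - c) := by
    rw [hb]; nth_rewrite 1 [hve]
    rw [real_inner_smul_left, inner_dir]
  have e3 : ⟪u, v⟫ = s * (t * Real.cos (θ1 - θ2)) := by
    nth_rewrite 1 [hue]; nth_rewrite 1 [hve]
    rw [real_inner_smul_left, real_inner_smul_right, inner_dir]
  have e4 : ‖v - u‖ ^ 2 = t ^ 2 - 2 * (s * (t * Real.cos (θ1 - θ2))) + s ^ 2 := by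
    rw [norm_sub_sq_real, real_inner_comm, e3]
  have h2' : s ^ 2 ≤ ‖v - u‖ ^ 2 := by
    have := pow_le_pow_left₀ (norm_nonneg u) h2 2
    simpa using this
  rw [e4] at h2'
  have ht2 : 2 * s * Real.cos (θ1 - θ2) ≤ t := by nlinarith
  -- angle bounds
  have hlo1 : lo l = c - π / 6 := by rw [lo, hc]; ring
  have hhi1 : hi l = c + π / 6 := by rw [hi, hc]; ring
  rw [hlo1] at hθ1l hθ2l
  rw [hhi1] at hθ1u hθ2u
  have hπ := Real.pi_pos
  have hcβ : 0 ≤ Real.cos (θ2 - c) :=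
    Real.cos_nonneg_of_mem_Icc ⟨by linarith, by linarith⟩
  have hc2 : 0 ≤ Real.cos ((θ1 - c) - 2 * (θ2 - c)) :=
    Real.cos_nonneg_of_mem_Icc ⟨by linarith, by linarith⟩
  have hid : Real.cos (θ1 - c) + Real.cos ((θ1 - c) - 2 * (θ2 - c)) =
      2 * Real.cos (θ1 - θ2) * Real.cos (θ2 - c) := by
    have hgen : ∀ A B : ℝ, Real.cos (A + B) + Real.cos (A - B) =
        2 * Real.cos A * Real.cos B := fun A B => by rw [Real.cos_add, Real.cos_sub]; ring
    have hg := hgen (θ1 - θ2) (θ2 - c)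
    rw [show (θ1 - θ2) + (θ2 - c) = θ1 - c by ring,
      show (θ1 - θ2) - (θ2 - c) = θ1 - c - 2 * (θ2 - c) by ring] at hg
    exact hg
  rw [e1, e2]
  have := mul_le_mul_of_nonneg_right ht2 hcβ
  nlinarith [mul_nonneg hs0.le hc2]

lemma wedge_cover (x : E) (hx : x ≠ 0) : ∃ l : Fin 6, x ∈ wedge l := by
  have hπ := Real.pi_pos
  set z : ℂ := ⟨x 0, x 1⟩ with hzdef
  have hz0 : z ≠ 0 := by
    intro h
    apply hx
    have h0 : x 0 = 0 := congrArg Complex.re h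
    have h1 : x 1 = 0 := congrArg Complex.im h
    ext i
    fin_cases i <;> simp [h0, h1]
  have habs : ‖z‖ = ‖x‖ := by
    rw [EuclideanSpace.norm_eq, Complex.norm_def, Complex.normSq_apply]
    simp only [Fin.sum_univ_two, Real.norm_eq_abs, sq_abs]
    congr 1
    ring
  have hxn : ‖x‖ ≠ 0 := norm_ne_zero_iff.mpr hx
  have hcos : Real.cos (Complex.arg z) = x 0 / ‖x‖ := by
    rw [Complex.cos_arg hz0, habs]
  have hsin : Real.sin (Complex.arg z) = x 1 / ‖x‖ := by
    rw [Complex.sin_arg, habs]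
  have hrep : ∀ θ : ℝ, Real.cos θ = Real.cos (Complex.arg z) →
      Real.sin θ = Real.sin (Complex.arg z) → x = ‖x‖ • dir θ := by
    intro θ hcθ hsθ
    have hx0 : x 0 = ‖x‖ * Real.cos θ := by rw [hcθ, hcos]; field_simp
    have hx1 : x 1 = ‖x‖ * Real.sin θ := by rw [hsθ, hsin]; field_simp
    ext i
    fin_cases i
    · exact hx0
    · exact hx1
  set θ0 := Complex.arg z with hθ0
  have hmem := Complex.arg_mem_Ioc z
  set θ' : ℝ := if θ0 < -(π/6) then θ0 + 2*π else θ0 with hθ'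
  have hxe : x = ‖x‖ • dir θ' := by
    apply hrep
    · rw [hθ']; split
      · exact Real.cos_add_two_pi θ0
      · rfl
    · rw [hθ']; split
      · exact Real.sin_add_two_pi θ0
      · rfl
  have hθ'l : -(π/6) ≤ θ' := by
    rw [hθ']; split
    · have := hmem.1; linarith
    · linarith [not_lt.mp (by assumption)]
  have hθ'u : θ' < 11*π/6 := by
    rw [hθ']; split
    · linarith [(by assumption : θ0 < -(π/6))]
    · have := hmem.2; linarith
  set m : ℤ := ⌊(θ' + π/6) * 3 / π⌋ with hm
  have hm0 : 0 ≤ m := Int.floor_nonneg.mpr (div_nonneg (by linarith) hπ.le)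
  have hm6 : m < 6 := by
    rw [hm]
    apply Int.floor_lt.mpr
    rw [div_lt_iff₀ hπ]
    push_cast
    linarith
  have hfl : (m : ℝ) ≤ (θ' + π/6) * 3 / π := Int.floor_le _
  have hfu : (θ' + π/6) * 3 / π < (m : ℝ) + 1 := by
    have := Int.lt_floor_add_one ((θ' + π/6) * 3 / π)
    push_cast at this
    exact this
  rw [le_div_iff₀ hπ] at hfl
  rw [div_lt_iff₀ hπ] at hfu
  refine ⟨⟨m.toNat, by omega⟩, hx, θ', ?_, ?_, hxe⟩
  · rw [lo]
    have hcast : ((m.toNat : ℕ) : ℝ) = (m : ℝ) := by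
      exact_mod_cast (Int.toNat_of_nonneg hm0)
    simp only [hcast]
    nlinarith
  · rw [hi]
    have hcast : ((m.toNat : ℕ) : ℝ) = (m : ℝ) := by
      exact_mod_cast (Int.toNat_of_nonneg hm0)
    simp only [hcast]
    nlinarith

/-- for `|P| ≥ 2` the undirected Semi-Yao graph of `P` has at least one
edge, and the minimum edge length of the undirected Semi-Yao graph equals the
closest-pair distance of `P`. -/
theorem semiYao_min_edge_is_closest_pair (P : Finset E) (hP : 2 ≤ P.card) :
    (∃ p q : E, SYGu P p q) ∧
    sInf {d : ℝ | ∃ p q : E, SYGu P p q ∧ d = ‖p - q‖} =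
      sInf {d : ℝ | ∃ p q : E, p ∈ P ∧ q ∈ P ∧ p ≠ q ∧ d = ‖p - q‖} := by
  obtain ⟨p0, hp0, q0, hq0, hpq0⟩ := Finset.one_lt_card.mp hP
  classical
  set D : Finset (E × E) := (P ×ˢ P).filter (fun pq : E × E => pq.1 ≠ pq.2) with hD
  have hDne : ((p0, q0)) ∈ D := by
    simp [hD, Finset.mem_filter, Finset.mem_product, hp0, hq0, hpq0]
  obtain ⟨⟨a, b⟩, habD, hminD⟩ :=
    D.exists_min_image (fun pq : E × E => ‖pq.1 - pq.2‖) ⟨_, hDne⟩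
  simp only [hD, Finset.mem_filter, Finset.mem_product] at habD
  obtain ⟨⟨ha, hb⟩, hab⟩ := habD
  have hmin : ∀ x ∈ P, ∀ y ∈ P, x ≠ y → ‖a - b‖ ≤ ‖x - y‖ := by
    intro x hx y hy hxy
    exact hminD (x, y) (by simp [hD, Finset.mem_filter, Finset.mem_product, hx, hy, hxy])
  have hba0 : b - a ≠ 0 := sub_ne_zero.mpr (Ne.symm hab)
  obtain ⟨l, hw⟩ := wedge_cover _ hba0
  have hedge : SYG P b a := by
    refine ⟨ha, l, ⟨hb, hw⟩, ?_⟩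
    rintro r ⟨hrP, hrw⟩
    by_cases hrb : r = b
    · subst hrb; exact le_refl _
    · have hra : r - a ∈ wedge l := hrw
      have hrna : r ≠ a := fun h => hra.1 (by rw [h, sub_self])
      apply key l (b - a) (r - a) hw hra
      · rw [show ‖b - a‖ = ‖a - b‖ from norm_sub_rev _ _]
        rw [show ‖r - a‖ = ‖a - r‖ from norm_sub_rev _ _]
        exact hmin a ha r hrP (Ne.symm hrna)
      · rw [show (r - a) - (b - a) = r - b by abel,
          show ‖b - a‖ = ‖a - b‖ from norm_sub_rev _ _]
        rw [show ‖r - b‖ = ‖b - r‖ from norm_sub_rev _ _]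
        exact hmin b hb r hrP (fun h => hrb h.symm)
  have hSY : SYGu P b a := Or.inl hedge
  refine ⟨⟨b, a, hSY⟩, ?_⟩
  have hSYGmem : ∀ x y : E, SYGu P x y → x ∈ P ∧ y ∈ P ∧ x ≠ y := by
    rintro x y (⟨hyP, l', ⟨hxP, hxw⟩, -⟩ | ⟨hxP, l', ⟨hyP, hyw⟩, -⟩)
    · exact ⟨hxP, hyP, fun he => hxw.1 (by rw [he, sub_self])⟩
    · exact ⟨hxP, hyP, fun he => hyw.1 (by rw [he, sub_self])⟩
  have hleast2 : IsLeast {d : ℝ | ∃ p q : E, p ∈ P ∧ q ∈ P ∧ p ≠ q ∧ d = ‖p - q‖} ‖a - b‖ := by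
    constructor
    · exact ⟨a, b, ha, hb, hab, rfl⟩
    · rintro d ⟨x, y, hx, hy, hxy, rfl⟩
      exact hmin x hx y hy hxy
  have hleast1 : IsLeast {d : ℝ | ∃ p q : E, SYGu P p q ∧ d = ‖p - q‖} ‖a - b‖ := by
    constructor
    · exact ⟨b, a, hSY, norm_sub_rev a b⟩
    · rintro d ⟨x, y, hxy, rfl⟩
      obtain ⟨hx, hy, hxyne⟩ := hSYGmem x y hxy
      exact hmin x hx y hy hxyne
  rw [hleast1.csInf_eq, hleast2.csInf_eq]
end
end
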